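/- Let G be a finite abelian group isomorphic to ℤ_{n_1} ⊕ … ⊕ ℤ_{n_k}, where k ≥ 1, each n_i ≥ 2, and n_{i+1} divides n_i for all 1 ≤ i ≤ k−1. If G is S_2-capable, then k ≥ 3 and n_1 = n_2 = n_3. -/

import Mathlib

/-- The commutator `[a,b] = a⁻¹ * b⁻¹ * a * b`. -/
def pcomm {E : Type} [Group E] (a b : E) : E := a⁻¹ * b⁻¹ * a * b

/-- The word `w(x,y,z,u) = [[x,y],[z,u]]` defining the variety `S_2` of metabelian groups. -/
def metaW {E : Type} [Group E] (x y z u : E) : E := pcomm (pcomm x y) (pcomm z u)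

/-- The marginal set of a group `E` with respect to the variety `S_2` of metabelian
groups: all `a ∈ E` such that replacing any one argument `g` of `w` by `g * a`
leaves the value of `w` unchanged. -/
def s2MarginalSet (E : Type) [Group E] : Set E :=
  {a : E | ∀ x y z u : E,
    metaW (x * a) y z u = metaW x y z u ∧
    metaW x (y * a) z u = metaW x y z u ∧
    metaW x y (z * a) u = metaW x y z u ∧
    metaW x y z (u * a) = metaW x y z u}

/-- `G` is `S_2`-capable if `G ≅ E / V*(E)` for some group `E`, where `V*(E)` is the
marginal (normal) subgroup of `E` with respect to the variety of metabelian groups,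
i.e. the normal subgroup whose underlying set is `s2MarginalSet E`. -/
def IsS2Capable (G : Type) [Group G] : Prop :=
  ∃ (E : Type) (_ : Group E) (H : Subgroup E) (_ : H.Normal),
    (H : Set E) = s2MarginalSet E ∧ Nonempty (G ≃* E ⧸ H)

section Ident
variable {E : Type} [Group E] (x y z u g p q d x' y' : E)
theorem metaW_def : metaW x y z u = pcomm (pcomm x y) (pcomm z u) := rfl
theorem metaW_one1 : metaW 1 y z u = 1 := by unfold metaW pcomm; group
theorem metaW_one2 : metaW x 1 z u = 1 := by unfold metaW pcomm; group
theorem metaW_one3 : metaW x y 1 u = 1 := by unfold metaW pcomm; group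
theorem metaW_one4 : metaW x y z 1 = 1 := by unfold metaW pcomm; group
theorem metaW_diag12 : metaW x x z u = 1 := by unfold metaW pcomm; group
theorem metaW_diag34 : metaW x y z z = 1 := by unfold metaW pcomm; group
theorem metaW_xyxy : metaW x y x y = 1 := by unfold metaW pcomm; group
theorem metaW_xyyx : metaW x y y x = 1 := by unfold metaW pcomm; group
theorem metaW_swap : metaW x y z u = (metaW z u x y)⁻¹ := by unfold metaW pcomm; group
theorem conj_metaW : g⁻¹ * metaW x y z u * g
    = metaW (x * pcomm x g) (y * pcomm y g) (z * pcomm z g) (u * pcomm u g) := by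
  unfold metaW pcomm; group
theorem pcomm_split : pcomm (p * q) d = q⁻¹ * (pcomm p d * q) * pcomm q d := by
  unfold pcomm; group
theorem pcomm_mul_left (h : ∀ g : E, pcomm p d * g = g * pcomm p d) :
    pcomm (p * q) d = pcomm p d * pcomm q d := by
  rw [pcomm_split, h q]; group
theorem pcomm_expand1 : pcomm (x * x') y
    = pcomm x y * (pcomm (pcomm x y) x' * pcomm x' y) := by unfold pcomm; group
theorem pcomm_expand2 : pcomm x (y * y')
    = pcomm x y' * (pcomm x y * pcomm (pcomm x y) y') := by unfold pcomm; group
end Ident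

section Marg
variable {E : Type} [Group E] {H : Subgroup E}
  (hset : (H : Set E) = s2MarginalSet E)
  (hcomm : ∀ x y : E, pcomm x y ∈ H)
include hset hcomm

omit hcomm in
theorem marg {a : E} (ha : a ∈ H) : ∀ x y z u : E,
    metaW (x * a) y z u = metaW x y z u ∧
    metaW x (y * a) z u = metaW x y z u ∧
    metaW x y (z * a) u = metaW x y z u ∧
    metaW x y z (u * a) = metaW x y z u := by
  have : a ∈ s2MarginalSet E := by rw [← hset]; exact ha
  exact this

omit hcomm in
theorem vanish1 {a : E} (ha : a ∈ H) (y z u : E) : metaW a y z u = 1 := by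
  have h := (marg hset ha 1 y z u).1
  rwa [one_mul, metaW_one1] at h

omit hcomm in
theorem vanish2 {a : E} (ha : a ∈ H) (x z u : E) : metaW x a z u = 1 := by
  have h := (marg hset ha x 1 z u).2.1
  rwa [one_mul, metaW_one2] at h

omit hcomm in
theorem vanish3 {a : E} (ha : a ∈ H) (x y u : E) : metaW x y a u = 1 := by
  have h := (marg hset ha x y 1 u).2.2.1
  rwa [one_mul, metaW_one3] at h

omit hcomm in
theorem vanish4 {a : E} (ha : a ∈ H) (x y z : E) : metaW x y z a = 1 := by
  have h := (marg hset ha x y z 1).2.2.2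
  rwa [one_mul, metaW_one4] at h

theorem centralW (g x y z u : E) : metaW x y z u * g = g * metaW x y z u := by
  have key := conj_metaW x y z u g
  rw [(marg hset (hcomm x g) x (y * pcomm y g) (z * pcomm z g) (u * pcomm u g)).1,
      (marg hset (hcomm y g) x y (z * pcomm z g) (u * pcomm u g)).2.1,
      (marg hset (hcomm z g) x y z (u * pcomm u g)).2.2.1,
      (marg hset (hcomm u g) x y z u).2.2.2] at key
  have h2 : metaW x y z u * g = g * (g⁻¹ * metaW x y z u * g) := by group
  rw [key] at h2; exact h2

theorem mulW1 (x x' y z u : E) :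
    metaW (x * x') y z u = metaW x y z u * metaW x' y z u := by
  have h1 : metaW (x * x') y z u
      = pcomm (pcomm x y * (pcomm (pcomm x y) x' * pcomm x' y)) (pcomm z u) := by
    rw [metaW_def, pcomm_expand1]
  rw [h1, pcomm_mul_left _ _ _ (fun g => by
        rw [← metaW_def]; exact centralW hset hcomm g x y z u),
      pcomm_mul_left _ _ _ (fun g => by
        rw [← metaW_def, vanish1 hset (hcomm x y) x' z u]; group),
      ← metaW_def, ← metaW_def, ← metaW_def,
      vanish1 hset (hcomm x y) x' z u, one_mul]

theorem mulW2 (x y y' z u : E) :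
    metaW x (y * y') z u = metaW x y z u * metaW x y' z u := by
  have h1 : metaW x (y * y') z u
      = pcomm (pcomm x y' * (pcomm x y * pcomm (pcomm x y) y')) (pcomm z u) := by
    rw [metaW_def, pcomm_expand2]
  rw [h1, pcomm_mul_left _ _ _ (fun g => by
        rw [← metaW_def]; exact centralW hset hcomm g x y' z u),
      pcomm_mul_left _ _ _ (fun g => by
        rw [← metaW_def]; exact centralW hset hcomm g x y z u),
      ← metaW_def, ← metaW_def, ← metaW_def,
      vanish1 hset (hcomm x y) y' z u, mul_one,
      centralW hset hcomm (metaW x y z u) x y' z u]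

theorem mulW3 (x y z z' u : E) :
    metaW x y (z * z') u = metaW x y z u * metaW x y z' u := by
  rw [metaW_swap x y (z * z') u, mulW1 hset hcomm, mul_inv_rev,
      ← metaW_swap, ← metaW_swap, centralW hset hcomm]

theorem mulW4 (x y z u u' : E) :
    metaW x y z (u * u') = metaW x y z u * metaW x y z u' := by
  rw [metaW_swap x y z (u * u'), mulW2 hset hcomm, mul_inv_rev,
      ← metaW_swap, ← metaW_swap, centralW hset hcomm]

theorem antisymW (x y z u : E) : metaW y x z u = (metaW x y z u)⁻¹ := by
  have h0 : (1 : E) = pcomm (pcomm y x * pcomm x y) (pcomm z u) := by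
    unfold pcomm; group
  rw [pcomm_mul_left _ _ _ (fun g => by
        rw [← metaW_def]; exact centralW hset hcomm g y x z u),
      ← metaW_def, ← metaW_def] at h0
  exact eq_inv_of_mul_eq_one_left h0.symm

theorem powW1 (x y z u : E) (m : ℕ) : metaW (x ^ m) y z u = (metaW x y z u) ^ m := by
  induction m with
  | zero => simpa using metaW_one1 y z u
  | succ m ih => rw [pow_succ, mulW1 hset hcomm, ih, pow_succ]

theorem powW2 (x y z u : E) (m : ℕ) : metaW x (y ^ m) z u = (metaW x y z u) ^ m := by
  induction m with
  | zero => simpa using metaW_one2 x z u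
  | succ m ih => rw [pow_succ, mulW2 hset hcomm, ih, pow_succ]

theorem powW3 (x y z u : E) (m : ℕ) : metaW x y (z ^ m) u = (metaW x y z u) ^ m := by
  induction m with
  | zero => simpa using metaW_one3 x y u
  | succ m ih => rw [pow_succ, mulW3 hset hcomm, ih, pow_succ]

theorem powW4 (x y z u : E) (m : ℕ) : metaW x y z (u ^ m) = (metaW x y z u) ^ m := by
  induction m with
  | zero => simpa using metaW_one4 x y z
  | succ m ih => rw [pow_succ, mulW4 hset hcomm, ih, pow_succ]

theorem memH {a : E} (hv : ∀ y z u : E, metaW a y z u = 1) : a ∈ H := by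
  have hv2 : ∀ x z u : E, metaW x a z u = 1 := fun x z u => by
    rw [antisymW hset hcomm, hv, inv_one]
  have hv3 : ∀ x y u : E, metaW x y a u = 1 := fun x y u => by
    rw [metaW_swap, hv, inv_one]
  have hv4 : ∀ x y z : E, metaW x y z a = 1 := fun x y z => by
    rw [metaW_swap, hv2, inv_one]
  have : a ∈ s2MarginalSet E := by
    intro x y z u
    refine ⟨?_, ?_, ?_, ?_⟩
    · rw [mulW1 hset hcomm, hv, mul_one]
    · rw [mulW2 hset hcomm, hv2, mul_one]
    · rw [mulW3 hset hcomm, hv3, mul_one]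
    · rw [mulW4 hset hcomm, hv4, mul_one]
  rw [← SetLike.mem_coe, hset]; exact this

end Marg

section Gen
variable {k : ℕ} {n : Fin k → ℕ}

def genP (n : Fin k → ℕ) (i : Fin k) : Multiplicative ((j : Fin k) → ZMod (n j)) :=
  Multiplicative.ofAdd (Pi.single i 1)

theorem pi_decomp (f : (j : Fin k) → ZMod (n j)) :
    f = ∑ i : Fin k, Pi.single i (f i) := by
  funext j
  rw [Finset.sum_apply, Finset.sum_pi_single]
  simp

theorem single_smul_one (hn : ∀ i, 2 ≤ n i) (i : Fin k) (c : ZMod (n i)) :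
    Pi.single (M := fun j => ZMod (n j)) i c = c.val • Pi.single i 1 := by
  haveI : NeZero (n i) := ⟨by have := hn i; omega⟩
  funext j
  rcases eq_or_ne j i with rfl | hne
  · simp only [Pi.smul_apply, Pi.single_eq_same, nsmul_eq_mul, mul_one]
    exact (ZMod.natCast_zmod_val c).symm
  · simp [Pi.single_eq_of_ne hne]

theorem genP_pow_eq_one_iff (hn : ∀ i, 2 ≤ n i) (i : Fin k) (m : ℕ) :
    genP n i ^ m = 1 ↔ n i ∣ m := by
  haveI : NeZero (n i) := ⟨by have := hn i; omega⟩
  rw [genP, ← ofAdd_nsmul, ← ofAdd_zero, Multiplicative.ofAdd.apply_eq_iff_eq]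
  constructor
  · intro h
    have := congrFun h i
    simp only [Pi.smul_apply, Pi.single_eq_same, Pi.zero_apply, nsmul_eq_mul, mul_one] at this
    exact (ZMod.natCast_eq_zero_iff m (n i)).mp this
  · intro h
    funext j
    rcases eq_or_ne j i with rfl | hne
    · simp only [Pi.smul_apply, Pi.single_eq_same, Pi.zero_apply, nsmul_eq_mul, mul_one]
      exact (ZMod.natCast_eq_zero_iff m (n j)).mpr h
    · simp [Pi.single_eq_of_ne hne]

theorem hom_eq_one_of_gen (hn : ∀ i, 2 ≤ n i) {A : Type} [Group A]
    (ψ : Multiplicative ((j : Fin k) → ZMod (n j)) →* A)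
    (hgen : ∀ i, ψ (genP n i) = 1) (p : Multiplicative ((j : Fin k) → ZMod (n j))) :
    ψ p = 1 := by
  have hp : p = ∏ i : Fin k, genP n i ^ (Multiplicative.toAdd p i).val := by
    apply Multiplicative.toAdd.injective
    rw [toAdd_prod]
    calc Multiplicative.toAdd p = ∑ i : Fin k, Pi.single i (Multiplicative.toAdd p i) :=
          pi_decomp _
    _ = ∑ i : Fin k, Multiplicative.toAdd (genP n i ^ (Multiplicative.toAdd p i).val) := by
        refine Finset.sum_congr rfl fun i _ => ?_
        rw [genP, ← ofAdd_nsmul, toAdd_ofAdd, ← single_smul_one hn]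
  rw [← MonoidHom.mem_ker] at *
  rw [hp]
  exact Subgroup.prod_mem _ fun i _ => Subgroup.pow_mem _ (hgen i) _

end Gen


/-- If a finite abelian group `ℤ_{n_1} ⊕ … ⊕ ℤ_{n_k}` (with `k ≥ 1`, each `n_i ≥ 2`,
`n_{i+1} ∣ n_i`) is `S_2`-capable, then `k ≥ 3` and `n_1 = n_2 = n_3`. -/
theorem s2Capable_finite_abelian_necessary (G : Type) [Group G]
    (k : ℕ) (hk : 1 ≤ k) (n : Fin k → ℕ)
    (hn : ∀ i : Fin k, 2 ≤ n i)
    (hdvd : ∀ i : Fin k, ∀ h : (i : ℕ) + 1 < k, n ⟨(i : ℕ) + 1, h⟩ ∣ n i)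
    (hG : Nonempty (G ≃* Multiplicative ((i : Fin k) → ZMod (n i))))
    (hcap : IsS2Capable G) :
    ∃ h : 3 ≤ k, n ⟨0, by omega⟩ = n ⟨1, by omega⟩ ∧ n ⟨1, by omega⟩ = n ⟨2, by omega⟩ := by
  classical
  obtain ⟨E, instE, H, hnorm, hset, ⟨isoE⟩⟩ := hcap
  obtain ⟨isoG⟩ := hG
  let e : Multiplicative ((i : Fin k) → ZMod (n i)) ≃* E ⧸ H := isoG.symm.trans isoE
  -- the quotient is commutative
  have hqcomm : ∀ q1 q2 : E ⧸ H, q1 * q2 = q2 * q1 := by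
    intro q1 q2
    calc q1 * q2 = e (e.symm q1 * e.symm q2) := by
          rw [map_mul, e.apply_symm_apply, e.apply_symm_apply]
    _ = e (e.symm q2 * e.symm q1) := by rw [mul_comm]
    _ = q2 * q1 := by rw [map_mul, e.apply_symm_apply, e.apply_symm_apply]
  have hcomm : ∀ x y : E, pcomm x y ∈ H := by
    intro x y
    rw [← QuotientGroup.eq_one_iff]
    have hmk : ((pcomm x y : E) : E ⧸ H)
        = pcomm ((x : E) : E ⧸ H) ((y : E) : E ⧸ H) := rfl
    rw [hmk]
    set a := ((x : E) : E ⧸ H); set b := ((y : E) : E ⧸ H)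
    calc pcomm a b = a⁻¹ * b⁻¹ * (a * b) := by unfold pcomm; group
    _ = a⁻¹ * b⁻¹ * (b * a) := by rw [hqcomm a b]
    _ = 1 := by group
  -- lifts of the generators
  have hsurj : Function.Surjective (QuotientGroup.mk (s := H)) := QuotientGroup.mk_surjective
  let t : Fin k → E := fun i => (hsurj (e (genP n i))).choose
  have ht : ∀ i, ((t i : E) : E ⧸ H) = e (genP n i) := fun i =>
    (hsurj (e (genP n i))).choose_spec
  -- generator reduction
  have reduceGen : ∀ F : E → E, (∀ a b : E, F (a * b) = F a * F b) →
      (∀ a : E, a ∈ H → F a = 1) → (∀ i : Fin k, F (t i) = 1) → ∀ x : E, F x = 1 := by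
    intro F hmul hker hgen x
    let f : E →* E := MonoidHom.mk' F hmul
    have hle : H ≤ f.ker := fun a ha => hker a ha
    let φ : E ⧸ H →* E := QuotientGroup.lift H f hle
    have hφmk : ∀ w : E, φ ((w : E) : E ⧸ H) = F w := fun w => rfl
    have hφ : ∀ p, (φ.comp e.toMonoidHom) p = 1 :=
      hom_eq_one_of_gen hn _ (fun i => by
        have : (φ.comp e.toMonoidHom) (genP n i) = φ (e (genP n i)) := rfl
        rw [this, ← ht i, hφmk]
        exact hgen i)
    have h1 : F x = φ ((x : E) : E ⧸ H) := rfl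
    rw [h1, ← e.apply_symm_apply ((x : E) : E ⧸ H)]
    exact hφ (e.symm _)
  -- powers of lifts and orders
  have tpow : ∀ i : Fin k, t i ^ (n i) ∈ H := by
    intro i
    rw [← QuotientGroup.eq_one_iff]
    have : ((t i ^ (n i) : E) : E ⧸ H) = ((t i : E) : E ⧸ H) ^ (n i) := rfl
    rw [this, ht i, ← map_pow, (genP_pow_eq_one_iff hn i (n i)).mpr dvd_rfl, map_one]
  have ordDvd : ∀ (i : Fin k) (m : ℕ), t i ^ m ∈ H → n i ∣ m := by
    intro i m hm
    rw [← genP_pow_eq_one_iff hn i m]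
    apply e.injective
    have : ((t i ^ m : E) : E ⧸ H) = 1 := (QuotientGroup.eq_one_iff _).mpr hm
    calc e (genP n i ^ m) = (e (genP n i)) ^ m := map_pow e _ m
    _ = (((t i : E) : E ⧸ H)) ^ m := by rw [ht i]
    _ = ((t i ^ m : E) : E ⧸ H) := rfl
    _ = 1 := this
    _ = e 1 := (map_one e).symm
  -- chain divisibility
  have chainDvd : ∀ (a b : ℕ) (hab : a ≤ b) (hb : b < k) (ha : a < k),
      n ⟨b, hb⟩ ∣ n ⟨a, ha⟩ := by
    intro a b hab
    induction b, hab using Nat.le_induction with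
    | base => intro hb ha; exact dvd_rfl
    | succ b hab ih =>
      intro hb ha
      have hb' : b < k := by omega
      exact dvd_trans (hdvd ⟨b, hb'⟩ hb) (ih hb' ha)
  -- step 1 : k ≥ 3
  have h3 : 3 ≤ k := by
    by_contra hlt
    have hk2 : k ≤ 2 := by omega
    have key : ∀ i j l m : Fin k, metaW (t i) (t j) (t l) (t m) = 1 := by
      intro i j l m
      by_cases hij : i = j
      · subst hij; exact metaW_diag12 _ _ _
      by_cases hlm : l = m
      · subst hlm; exact metaW_diag34 _ _ _
      have hij' : (i : ℕ) ≠ (j : ℕ) := fun h => hij (Fin.ext h)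
      have hlm' : (l : ℕ) ≠ (m : ℕ) := fun h => hlm (Fin.ext h)
      have hi := i.isLt; have hj := j.isLt; have hl := l.isLt; have hm := m.isLt
      have hcases : ((i : ℕ) = (l : ℕ) ∧ (j : ℕ) = (m : ℕ)) ∨
          ((i : ℕ) = (m : ℕ) ∧ (j : ℕ) = (l : ℕ)) := by omega
      rcases hcases with ⟨h5, h6⟩ | ⟨h5, h6⟩
      · rw [← Fin.ext h5, ← Fin.ext h6]; exact metaW_xyxy _ _
      · rw [← Fin.ext h5, ← Fin.ext h6]; exact metaW_xyyx _ _
    have hall : ∀ x : E, x ∈ H := by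
      intro x
      apply memH hset hcomm
      have h4 : ∀ (i j l : Fin k) (u : E), metaW (t i) (t j) (t l) u = 1 := fun i j l =>
        reduceGen _ (fun a b => mulW4 hset hcomm _ _ _ a b)
          (fun a ha => vanish4 hset ha _ _ _) (fun m => key i j l m)
      have h3' : ∀ (i j : Fin k) (z u : E), metaW (t i) (t j) z u = 1 := fun i j z u =>
        reduceGen (fun z' => metaW (t i) (t j) z' u)
          (fun a b => mulW3 hset hcomm _ _ a b _)
          (fun a ha => vanish3 hset ha _ _ _) (fun l => h4 i j l u) z
      have h2' : ∀ (i : Fin k) (y z u : E), metaW (t i) y z u = 1 := fun i y z u =>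
        reduceGen (fun y' => metaW (t i) y' z u)
          (fun a b => mulW2 hset hcomm _ a b _ _)
          (fun a ha => vanish2 hset ha _ _ _) (fun j => h3' i j z u) y
      intro y z u
      exact reduceGen (fun x' => metaW x' y z u)
        (fun a b => mulW1 hset hcomm a b _ _ _)
        (fun a ha => vanish1 hset ha _ _ _) (fun i => h2' i y z u) x
    have h1 : n ⟨0, by omega⟩ ∣ 1 := by
      apply ordDvd ⟨0, by omega⟩ 1
      rw [pow_one]
      exact hall _
    have := hn ⟨0, by omega⟩
    have := Nat.le_of_dvd one_pos h1
    omega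
  -- notation for the first three indices
  have h0k : (0 : ℕ) < k := by omega
  have h1k : (1 : ℕ) < k := by omega
  have h2k : (2 : ℕ) < k := by omega
  set i0 : Fin k := ⟨0, h0k⟩
  set i1 : Fin k := ⟨1, h1k⟩
  set i2 : Fin k := ⟨2, h2k⟩
  -- step 2 : n 0 = n 1
  have key2 : ∀ j l m : Fin k, (metaW (t i0) (t j) (t l) (t m)) ^ (n i1) = 1 := by
    intro j l m
    by_cases hj : j = i0
    · subst hj; rw [metaW_diag12, one_pow]
    · have hj1 : 1 ≤ (j : ℕ) := by
        have : (j : ℕ) ≠ 0 := fun h => hj (Fin.ext h)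
        omega
      have hdj : n ⟨(j : ℕ), j.isLt⟩ ∣ n i1 := chainDvd 1 (j : ℕ) hj1 j.isLt h1k
      rw [Fin.eta] at hdj
      obtain ⟨c, hc⟩ := hdj
      rw [hc, pow_mul, ← powW2 hset hcomm, vanish2 hset (tpow j), one_pow]
  have hmem2 : t i0 ^ (n i1) ∈ H := by
    apply memH hset hcomm
    have p4 : ∀ (j l : Fin k) (u : E), (metaW (t i0) (t j) (t l) u) ^ (n i1) = 1 := fun j l =>
      reduceGen (fun u => (metaW (t i0) (t j) (t l) u) ^ (n i1))
        (fun a b => by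
          beta_reduce
          rw [mulW4 hset hcomm]
          exact Commute.mul_pow (centralW hset hcomm _ _ _ _ _) _)
        (fun a ha => by beta_reduce; rw [vanish4 hset ha, one_pow]) (fun m => key2 j l m)
    have p3 : ∀ (j : Fin k) (z u : E), (metaW (t i0) (t j) z u) ^ (n i1) = 1 := fun j z u =>
      reduceGen (fun z' => (metaW (t i0) (t j) z' u) ^ (n i1))
        (fun a b => by
          beta_reduce
          rw [mulW3 hset hcomm]
          exact Commute.mul_pow (centralW hset hcomm _ _ _ _ _) _)
        (fun a ha => by beta_reduce; rw [vanish3 hset ha, one_pow]) (fun l => p4 j l u) z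
    have p2 : ∀ (y z u : E), (metaW (t i0) y z u) ^ (n i1) = 1 := fun y z u =>
      reduceGen (fun y' => (metaW (t i0) y' z u) ^ (n i1))
        (fun a b => by
          beta_reduce
          rw [mulW2 hset hcomm]
          exact Commute.mul_pow (centralW hset hcomm _ _ _ _ _) _)
        (fun a ha => by beta_reduce; rw [vanish2 hset ha, one_pow]) (fun j => p3 j z u) y
    intro y z u
    rw [powW1 hset hcomm]
    exact p2 y z u
  have eq1 : n i0 = n i1 :=
    Nat.dvd_antisymm (ordDvd i0 _ hmem2) (chainDvd 0 1 (by omega) h1k h0k)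
  -- step 3 : n 1 = n 2
  have key3 : ∀ j l m : Fin k, (metaW (t i1) (t j) (t l) (t m)) ^ (n i2) = 1 := by
    intro j l m
    by_cases hj2 : 2 ≤ (j : ℕ)
    · have hdj : n ⟨(j : ℕ), j.isLt⟩ ∣ n i2 := chainDvd 2 (j : ℕ) hj2 j.isLt h2k
      rw [Fin.eta] at hdj
      obtain ⟨c, hc⟩ := hdj
      rw [hc, pow_mul, ← powW2 hset hcomm, vanish2 hset (tpow j), one_pow]
    by_cases hl2 : 2 ≤ (l : ℕ)
    · have hdl : n ⟨(l : ℕ), l.isLt⟩ ∣ n i2 := chainDvd 2 (l : ℕ) hl2 l.isLt h2k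
      rw [Fin.eta] at hdl
      obtain ⟨c, hc⟩ := hdl
      rw [hc, pow_mul, ← powW3 hset hcomm, vanish3 hset (tpow l), one_pow]
    by_cases hm2 : 2 ≤ (m : ℕ)
    · have hdm : n ⟨(m : ℕ), m.isLt⟩ ∣ n i2 := chainDvd 2 (m : ℕ) hm2 m.isLt h2k
      rw [Fin.eta] at hdm
      obtain ⟨c, hc⟩ := hdm
      rw [hc, pow_mul, ← powW4 hset hcomm, vanish4 hset (tpow m), one_pow]
    -- now j, l, m all have value < 2
    have hW : metaW (t i1) (t j) (t l) (t m) = 1 := by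
      by_cases hj : j = i1
      · subst hj; exact metaW_diag12 _ _ _
      by_cases hlm : l = m
      · subst hlm; exact metaW_diag34 _ _ _
      have hji : (j : ℕ) ≠ 1 := fun h => hj (Fin.ext h)
      have hlm' : (l : ℕ) ≠ (m : ℕ) := fun h => hlm (Fin.ext h)
      have hi1v : (i1 : ℕ) = 1 := rfl
      have hcases : ((i1 : ℕ) = (l : ℕ) ∧ (j : ℕ) = (m : ℕ)) ∨
          ((i1 : ℕ) = (m : ℕ) ∧ (j : ℕ) = (l : ℕ)) := by omega
      rcases hcases with ⟨h5, h6⟩ | ⟨h5, h6⟩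
      · rw [← Fin.ext h5, ← Fin.ext h6]; exact metaW_xyxy _ _
      · rw [← Fin.ext h5, ← Fin.ext h6]; exact metaW_xyyx _ _
    rw [hW, one_pow]
  have hmem3 : t i1 ^ (n i2) ∈ H := by
    apply memH hset hcomm
    have p4 : ∀ (j l : Fin k) (u : E), (metaW (t i1) (t j) (t l) u) ^ (n i2) = 1 := fun j l =>
      reduceGen (fun u => (metaW (t i1) (t j) (t l) u) ^ (n i2))
        (fun a b => by
          beta_reduce
          rw [mulW4 hset hcomm]
          exact Commute.mul_pow (centralW hset hcomm _ _ _ _ _) _)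
        (fun a ha => by beta_reduce; rw [vanish4 hset ha, one_pow]) (fun m => key3 j l m)
    have p3 : ∀ (j : Fin k) (z u : E), (metaW (t i1) (t j) z u) ^ (n i2) = 1 := fun j z u =>
      reduceGen (fun z' => (metaW (t i1) (t j) z' u) ^ (n i2))
        (fun a b => by
          beta_reduce
          rw [mulW3 hset hcomm]
          exact Commute.mul_pow (centralW hset hcomm _ _ _ _ _) _)
        (fun a ha => by beta_reduce; rw [vanish3 hset ha, one_pow]) (fun l => p4 j l u) z
    have p2 : ∀ (y z u : E), (metaW (t i1) y z u) ^ (n i2) = 1 := fun y z u =>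
      reduceGen (fun y' => (metaW (t i1) y' z u) ^ (n i2))
        (fun a b => by
          beta_reduce
          rw [mulW2 hset hcomm]
          exact Commute.mul_pow (centralW hset hcomm _ _ _ _ _) _)
        (fun a ha => by beta_reduce; rw [vanish2 hset ha, one_pow]) (fun j => p3 j z u) y
    intro y z u
    rw [powW1 hset hcomm]
    exact p2 y z u
  have eq2 : n i1 = n i2 :=
    Nat.dvd_antisymm (ordDvd i1 _ hmem3) (chainDvd 1 2 (by omega) h2k h1k)
  exact ⟨h3, eq1, eq2⟩
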